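/- Let A be an integral domain and Δ ⊆ Spec(A) such that A = ⋂_{p∈Δ} A_p is a locally finite intersection. Then the t-operation of A equals ∧_{p∈Δ} t_p; that is, I^t = ⋂_{p∈Δ}(IA_p)^{t_p} for every nonzero fractional ideal I of A, where t_p denotes the t-operation of A_p. -/

import Mathlib

open scoped nonZeroDivisors

section TOperation

variable (D : Type*) [CommRing D] [IsDomain D]
  (F : Type*) [Field F] [Algebra D F] [IsFractionRing D F]

/-- The `v`-operation on fractional ideals of `D`: `I^v = (D : (D : I))`. -/
noncomputable def vOp (I : FractionalIdeal D⁰ F) : FractionalIdeal D⁰ F :=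
  1 / (1 / I)

/-- The `t`-operation (as a set): `N^t = ⋃ {J^v : J ⊆ N, J a finitely generated
fractional ideal}`. -/
noncomputable def tSet (N : Submodule D F) : Set F :=
  ⋃ J ∈ {J : FractionalIdeal D⁰ F | (J : Submodule D F) ≤ N ∧ (J : Submodule D F).FG},
    (vOp D F J : Set F)

/-- The image of an integral ideal of `D` in `F`, as a `D`-submodule of `F`. -/
def idlSub (I : Ideal D) : Submodule D F :=
  ((I : FractionalIdeal D⁰ F) : Submodule D F)

/-- A (nonzero) ideal `I` of `D` is a `t`-ideal if `I^t = I`. -/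
def IsTIdeal (I : Ideal D) : Prop :=
  I ≠ 0 ∧ tSet D F (idlSub D F I) = (idlSub D F I : Set F)

/-- A (nonzero) ideal `I` of `D` is `t`-finite if `J^t = I^t` for some finitely
generated (nonzero) ideal `J`. -/
def IsTFinite (I : Ideal D) : Prop :=
  I ≠ 0 ∧ ∃ J : Ideal D, J ≠ 0 ∧ J.FG ∧ tSet D F (idlSub D F J) = tSet D F (idlSub D F I)

/-- An ideal of `D` is `t`-maximal if it is maximal among proper `t`-ideals. -/
def IsTMaximal (M : Ideal D) : Prop :=
  M ≠ ⊤ ∧ IsTIdeal D F M ∧ ∀ J : Ideal D, J ≠ ⊤ → IsTIdeal D F J → M ≤ J → J = M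

/-- `D` has the `t`-finite character if every nonzero element of `D` lies in only
finitely many `t`-maximal ideals. -/
def HasTFiniteCharacter : Prop :=
  ∀ a : D, a ≠ 0 → {M : Ideal D | IsTMaximal D F M ∧ a ∈ M}.Finite

/-- A (nonzero) ideal `I` of `D` is `t`-invertible if `(I·I⁻¹)^t = D`, where
`I⁻¹ = (D : I)`. -/
def IsTInvertible (I : Ideal D) : Prop :=
  I ≠ 0 ∧ tSet D F
      (((I : FractionalIdeal D⁰ F) * (1 / (I : FractionalIdeal D⁰ F)) :
        FractionalIdeal D⁰ F) : Submodule D F) =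
    (((1 : FractionalIdeal D⁰ F) : Submodule D F) : Set F)

/-- `D` is `v`-coherent: for every nonzero finitely generated ideal `I`,
`I⁻¹ = J^v` for some finitely generated (nonzero) fractional ideal `J`. -/
def IsVCoherent : Prop :=
  ∀ I : Ideal D, I ≠ 0 → I.FG →
    ∃ J : FractionalIdeal D⁰ F, J ≠ 0 ∧ (J : Submodule D F).FG ∧
      1 / (I : FractionalIdeal D⁰ F) = vOp D F J

/-- `D` is a PvMD if every nonzero finitely generated ideal of `D` is `t`-invertible. -/
def IsPvMD : Prop :=
  ∀ I : Ideal D, I ≠ 0 → I.FG → IsTInvertible D F I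

/-- `D` is a GCD domain: any two elements have a greatest common divisor. -/
def IsGCDDomain (D : Type*) [CommRing D] [IsDomain D] : Prop :=
  ∀ a b : D, ∃ d : D, d ∣ a ∧ d ∣ b ∧ ∀ c : D, c ∣ a → c ∣ b → c ∣ d

end TOperation

section Helpers

variable {D : Type*} [CommRing D] [IsDomain D]
  {F : Type*} [Field F] [Algebra D F] [IsFractionRing D F]

theorem one_div_ne_zero' {J : FractionalIdeal D⁰ F} (hJ : J ≠ 0) :
    (1 / J : FractionalIdeal D⁰ F) ≠ 0 := by
  obtain ⟨a, haS, ha⟩ := J.isFractional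
  have ha0 : (a : D) ≠ 0 := mem_nonZeroDivisors_iff_ne_zero.mp haS
  have hmem : algebraMap D F a ∈ (1 / J : FractionalIdeal D⁰ F) := by
    rw [FractionalIdeal.mem_div_iff_of_ne_zero hJ]
    intro y hy
    obtain ⟨b, hb⟩ := ha y (FractionalIdeal.mem_coe.mpr hy)
    exact (FractionalIdeal.mem_one_iff _).mpr ⟨b, by rw [hb, Algebra.smul_def]⟩
  intro h0
  rw [h0, FractionalIdeal.mem_zero_iff] at hmem
  exact ha0 (IsFractionRing.to_map_eq_zero_iff.mp hmem)

theorem mem_vOp_iff {J : FractionalIdeal D⁰ F} (hJ : J ≠ 0) {x : F} :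
    x ∈ vOp D F J ↔
      ∀ z : F, (∀ y ∈ J, z * y ∈ (1 : FractionalIdeal D⁰ F)) →
        x * z ∈ (1 : FractionalIdeal D⁰ F) := by
  show x ∈ 1 / (1 / J) ↔ _
  rw [FractionalIdeal.mem_div_iff_of_ne_zero (one_div_ne_zero' hJ)]
  constructor
  · intro h z hz
    exact h z ((FractionalIdeal.mem_div_iff_of_ne_zero hJ).mpr hz)
  · intro h z hz
    exact h z ((FractionalIdeal.mem_div_iff_of_ne_zero hJ).mp hz)

theorem vOp_zero' : vOp D F 0 = 0 := by
  show 1 / (1 / 0) = 0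
  rw [FractionalIdeal.div_zero, FractionalIdeal.div_zero]

theorem mem_tSet_iff {N : Submodule D F} {x : F} :
    x ∈ tSet D F N ↔ ∃ J : FractionalIdeal D⁰ F,
      (J : Submodule D F) ≤ N ∧ (J : Submodule D F).FG ∧ x ∈ vOp D F J := by
  simp only [tSet, Set.mem_iUnion, Set.mem_setOf_eq, SetLike.mem_coe, exists_prop]
  tauto

theorem zero_mem_tSet (N : Submodule D F) : (0 : F) ∈ tSet D F N := by
  rw [mem_tSet_iff]
  refine ⟨0, ?_, ?_, ?_⟩
  · rw [FractionalIdeal.coe_zero]; exact bot_le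
  · rw [FractionalIdeal.coe_zero]; exact Submodule.fg_bot
  · rw [vOp_zero']; exact (FractionalIdeal.mem_zero_iff _).mpr rfl

theorem eq_zero_of_mem_vOp_zero {x : F} (hx : x ∈ vOp D F 0) : x = 0 := by
  rw [vOp_zero'] at hx
  exact (FractionalIdeal.mem_zero_iff _).mp hx

end Helpers

section SubalgHelpers

variable {A : Type*} [CommRing A] [IsDomain A]
  {K : Type*} [Field K] [Algebra A K] [IsFractionRing A K]

theorem mem_subalg_iff (S : Submonoid A) (hS : S ≤ A⁰) (x : K) :
    x ∈ Localization.subalgebra K S hS ↔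
      ∃ a s : A, s ∈ S ∧ x * algebraMap A K s = algebraMap A K a := by
  show x ∈ {x : K | ∃ (a s : A) (hs : s ∈ S), x = IsLocalization.mk' K a ⟨s, hS hs⟩} ↔ _
  constructor
  · rintro ⟨a, s, hs, rfl⟩
    exact ⟨a, s, hs, IsLocalization.mk'_spec K a ⟨s, hS hs⟩⟩
  · rintro ⟨a, s, hs, h⟩
    exact ⟨a, s, hs, (IsLocalization.eq_mk'_iff_mul_eq).mpr h⟩

omit [IsDomain A] [IsFractionRing A K] in
theorem mem_one_subalg (R : Subalgebra A K) [IsFractionRing R K] {x : K} :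
    x ∈ (1 : FractionalIdeal R⁰ K) ↔ x ∈ R := by
  rw [FractionalIdeal.mem_one_iff]
  constructor
  · rintro ⟨r, rfl⟩; exact r.2
  · intro hx; exact ⟨⟨x, hx⟩, rfl⟩

omit [IsDomain A] [IsFractionRing A K] in
theorem mem_one_submodule_subalg (R : Subalgebra A K) {x : K} :
    x ∈ (1 : Submodule R K) ↔ x ∈ R := by
  rw [Submodule.mem_one]
  constructor
  · rintro ⟨r, rfl⟩; exact r.2
  · intro hx; exact ⟨⟨x, hx⟩, rfl⟩

omit [IsDomain A] [IsFractionRing A K] in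
theorem subalg_unit_inv (R : Subalgebra A K) (a : A) (h : IsUnit (algebraMap A R a)) :
    ∃ v : K, v ∈ R ∧ algebraMap A K a * v = 1 := by
  obtain ⟨u, hu⟩ := h
  refine ⟨(((u⁻¹ : Rˣ) : R) : K), ((u⁻¹ : Rˣ) : R).2, ?_⟩
  have h2 : algebraMap A K a = ((algebraMap A R a : R) : K) := by
    rw [IsScalarTower.algebraMap_apply A R K]; rfl
  rw [h2, ← hu, ← MulMemClass.coe_mul, u.mul_inv, OneMemClass.coe_one]

end SubalgHelpers

variable (A : Type*) [CommRing A] [IsDomain A]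
  (K : Type*) [Field K] [Algebra A K] [IsFractionRing A K]

/-- The localization `A_p` of `A` at a prime ideal `p`, realized as a subalgebra of the
quotient field `K` of `A`. -/
@[reducible] noncomputable def locAt (p : Ideal A) (hp : p.IsPrime) : Subalgebra A K :=
  Localization.subalgebra K (@Ideal.primeCompl A _ p hp)
    (@Ideal.primeCompl_le_nonZeroDivisors A _ _ p hp)

/-- Let `A = ⋂_{p ∈ Δ} A_p` be a locally finite intersection of localizations at primes
`p ∈ Δ`. Then the `t`-operation of `A` equals `∧_{p∈Δ} t_p`; that is,
`I^t = ⋂_{p∈Δ} (IA_p)^{t_p}` for every nonzero fractional ideal `I` of `A`, where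
`t_p` is the `t`-operation of `A_p`. -/
theorem t_eq_inf_local_t
    {A : Type*} [CommRing A] [IsDomain A]
    {K : Type*} [Field K] [Algebra A K] [IsFractionRing A K]
    (Δ : Set (Ideal A)) (hΔ : ∀ p ∈ Δ, p.IsPrime)
    (hint : (⋂ (p : Ideal A), ⋂ (h : p ∈ Δ), ((locAt A K p (hΔ p h) : Subalgebra A K) : Set K))
      = Set.range (algebraMap A K))
    (hlf : ∀ a : A, a ≠ 0 →
      {p : Ideal A | ∃ h : p ∈ Δ,
        ¬IsUnit (algebraMap A (locAt A K p (hΔ p h)) a)}.Finite) :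
    ∀ I : FractionalIdeal A⁰ K, I ≠ 0 →
      tSet A K (I : Submodule A K) =
        ⋂ (p : Ideal A), ⋂ (h : p ∈ Δ),
          tSet (locAt A K p (hΔ p h)) K
            (Submodule.span (locAt A K p (hΔ p h)) (I : Set K)) := by
  classical
  intro I hI
  ext x
  simp only [Set.mem_iInter]
  constructor
  · -- LHS ⊆ RHS
    intro hx p h
    haveI : p.IsPrime := hΔ p h
    rw [mem_tSet_iff] at hx
    obtain ⟨J, hJle, hJfg, hxJ⟩ := hx
    by_cases hJ0 : J = 0
    · rw [hJ0] at hxJ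
      rw [eq_zero_of_mem_vOp_zero hxJ]
      exact zero_mem_tSet _
    obtain ⟨s, hs⟩ := hJfg
    have hJset : (J : Set K) = ((J : Submodule A K) : Set K) :=
      (FractionalIdeal.coeToSet_coeToSubmodule J).symm
    have hspan : Submodule.span (locAt A K p (hΔ p h)) (J : Set K)
        = Submodule.span (locAt A K p (hΔ p h)) (s : Set K) := by
      rw [hJset, ← hs]
      exact Submodule.span_span_of_tower A (locAt A K p (hΔ p h)) (s : Set K)
    have hfg' : (Submodule.span (locAt A K p (hΔ p h)) (J : Set K)).FG := ⟨s, hspan.symm⟩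
    let J' : FractionalIdeal (locAt A K p (hΔ p h))⁰ K :=
      ⟨Submodule.span (locAt A K p (hΔ p h)) (J : Set K),
        FractionalIdeal.isFractional_of_fg hfg'⟩
    rw [mem_tSet_iff]
    refine ⟨J', ?_, hfg', ?_⟩
    · show Submodule.span (locAt A K p (hΔ p h)) (J : Set K) ≤ _
      apply Submodule.span_mono
      rw [hJset, ← FractionalIdeal.coeToSet_coeToSubmodule I]
      intro y hy
      exact SetLike.mem_coe.mpr (FractionalIdeal.mem_coe.mp (hJle (SetLike.mem_coe.mp hy)))
    · -- x ∈ vOp of J'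
      obtain ⟨y1, hy1J, hy10⟩ : ∃ y ∈ J, y ≠ 0 := by
        by_contra hc
        push_neg at hc
        exact hJ0 (FractionalIdeal.eq_zero_iff.mpr hc)
      have hJ'0 : J' ≠ 0 := by
        intro h0
        have hy1 : y1 ∈ J' := Submodule.subset_span (SetLike.mem_coe.mpr hy1J)
        rw [h0, FractionalIdeal.mem_zero_iff] at hy1
        exact hy10 hy1
      rw [mem_vOp_iff hJ'0]
      intro z hz
      have hgen : ∀ g ∈ s, ∃ b t : A, t ∈ p.primeCompl ∧
          (z * g) * algebraMap A K t = algebraMap A K b := by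
        intro g hg
        have hgJ : g ∈ J := by
          rw [← FractionalIdeal.mem_coe, ← hs]
          exact Submodule.subset_span hg
        have h1 : z * g ∈ (1 : FractionalIdeal (locAt A K p (hΔ p h))⁰ K) :=
          hz g (Submodule.subset_span (SetLike.mem_coe.mpr hgJ))
        rw [mem_one_subalg, mem_subalg_iff] at h1
        exact h1
      choose bf tf htf hbtf using hgen
      set σ : A := ∏ u ∈ s.attach, tf u.1 u.2 with hσdef
      have hσ : σ ∈ p.primeCompl := Submonoid.prod_mem _ fun u _ => htf u.1 u.2
      have hkey : (J : Submodule A K) ≤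
          Submodule.comap (LinearMap.mulLeft A (z * algebraMap A K σ))
            ((1 : FractionalIdeal A⁰ K) : Submodule A K) := by
        rw [← hs, Submodule.span_le]
        intro g hg
        simp only [SetLike.mem_coe, Submodule.mem_comap, LinearMap.mulLeft_apply]
        have hr : σ = tf g hg * ∏ u ∈ s.attach.erase ⟨g, hg⟩, tf u.1 u.2 := by
          rw [hσdef]
          exact (Finset.mul_prod_erase s.attach _ (Finset.mem_attach s ⟨g, hg⟩)).symm
        have hcalc : (z * algebraMap A K σ) * g
            = algebraMap A K (bf g hg * ∏ u ∈ s.attach.erase ⟨g, hg⟩, tf u.1 u.2) := by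
          rw [hr, map_mul, map_mul]
          calc (z * (algebraMap A K (tf g hg)
                * algebraMap A K (∏ u ∈ s.attach.erase ⟨g, hg⟩, tf u.1 u.2))) * g
              = ((z * g) * algebraMap A K (tf g hg))
                * algebraMap A K (∏ u ∈ s.attach.erase ⟨g, hg⟩, tf u.1 u.2) := by ring
            _ = algebraMap A K (bf g hg)
                * algebraMap A K (∏ u ∈ s.attach.erase ⟨g, hg⟩, tf u.1 u.2) := by
                rw [hbtf g hg]
        rw [FractionalIdeal.mem_coe, hcalc]
        exact FractionalIdeal.coe_mem_one _ _
      have hx1 : x * (z * algebraMap A K σ) ∈ (1 : FractionalIdeal A⁰ K) := by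
        rw [mem_vOp_iff hJ0] at hxJ
        refine hxJ _ fun y hy => ?_
        have h2 := hkey (FractionalIdeal.mem_coe.mpr hy)
        simp only [Submodule.mem_comap, LinearMap.mulLeft_apply] at h2
        exact FractionalIdeal.mem_coe.mp h2
      obtain ⟨b, hb⟩ := (FractionalIdeal.mem_one_iff _).mp hx1
      rw [mem_one_subalg, mem_subalg_iff]
      exact ⟨b, σ, hσ, by rw [mul_assoc, ← hb]⟩
  · -- RHS ⊆ LHS
    intro hx
    by_cases hx0 : x = 0
    · rw [hx0]; exact zero_mem_tSet _
    have key : ∀ p, ∀ h : p ∈ Δ, ∃ J' : FractionalIdeal (locAt A K p (hΔ p h))⁰ K,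
        (J' : Submodule (locAt A K p (hΔ p h)) K) ≤
          Submodule.span (locAt A K p (hΔ p h)) (I : Set K) ∧
        (J' : Submodule (locAt A K p (hΔ p h)) K).FG ∧
        x ∈ vOp (locAt A K p (hΔ p h)) K J' := by
      intro p h
      exact (mem_tSet_iff (D := ↥(locAt A K p (hΔ p h))) (F := K)).mp (hx p h)
    choose J' hle hfg hxv using key
    have hJ'0 : ∀ p (h : p ∈ Δ), J' p h ≠ 0 := by
      intro p h h0
      have hxv' := hxv p h
      rw [h0] at hxv'
      exact hx0 (eq_zero_of_mem_vOp_zero hxv')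
    have hW : ∀ p, ∀ h : p ∈ Δ, ∃ W : Submodule A K, W.FG ∧ W ≤ (I : Submodule A K) ∧
        (J' p h : Submodule (locAt A K p (hΔ p h)) K) ≤
          Submodule.span (locAt A K p (hΔ p h)) (W : Set K) := by
      intro p h
      obtain ⟨s, hs⟩ := hfg p h
      have hgen : ∀ g : K, g ∈ (s : Set K) → ∃ t : Finset K, (t : Set K) ⊆ (I : Set K) ∧
          g ∈ Submodule.span (locAt A K p (hΔ p h)) (t : Set K) := by
        intro g hg
        have hgsp : g ∈ Submodule.span (locAt A K p (hΔ p h)) (I : Set K) := by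
          apply hle p h
          rw [← hs]
          exact Submodule.subset_span hg
        exact Submodule.mem_span_finite_of_mem_span hgsp
      choose tf htf hmemf using hgen
      refine ⟨Submodule.span A
        (↑(s.attach.biUnion fun u => tf u.1 (Finset.mem_coe.mpr u.2)) : Set K),
        ⟨_, rfl⟩, ?_, ?_⟩
      · rw [Submodule.span_le]
        intro y hy
        simp only [Finset.coe_biUnion, Set.mem_iUnion, Finset.mem_coe] at hy
        obtain ⟨u, -, hu⟩ := hy
        have h2 := htf u.1 (Finset.mem_coe.mpr u.2) (Finset.mem_coe.mpr hu)
        rw [← FractionalIdeal.coeToSet_coeToSubmodule I] at h2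
        exact h2
      · rw [← hs, Submodule.span_le]
        intro g hg
        have hg' := hmemf g hg
        refine SetLike.mem_coe.mpr (Submodule.span_mono ?_ hg')
        intro y hy
        apply Submodule.subset_span
        simp only [Finset.coe_biUnion, Set.mem_iUnion, Finset.mem_coe]
        exact ⟨⟨g, hg⟩, Finset.mem_attach _ _, hy⟩
    choose W hWfg hWle hWsub using hW
    obtain ⟨aD, haS, haI⟩ := I.isFractional
    have ha0 : aD ≠ 0 := mem_nonZeroDivisors_iff_ne_zero.mp haS
    obtain ⟨y0, hy0I, hy00⟩ : ∃ y ∈ I, y ≠ 0 := by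
      by_contra hc
      push_neg at hc
      exact hI (FractionalIdeal.eq_zero_iff.mpr hc)
    obtain ⟨c, hcspec⟩ := haI y0 (FractionalIdeal.mem_coe.mpr hy0I)
    have hay0 : algebraMap A K c = algebraMap A K aD * y0 := by
      rw [hcspec, Algebra.smul_def]
    have hc0 : c ≠ 0 := by
      intro h0
      rw [h0, map_zero] at hay0
      rcases mul_eq_zero.mp hay0.symm with h | h
      · exact ha0 (IsFractionRing.to_map_eq_zero_iff.mp h)
      · exact hy00 h
    set B : Finset (Ideal A) := ((hlf aD ha0).union (hlf c hc0)).toFinset with hBdef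
    set U : Submodule A K :=
      Submodule.span A {y0} ⊔ B.sup (fun q => if hq : q ∈ Δ then W q hq else ⊥) with hUdef
    have hUfg : U.FG := Submodule.FG.sup (Submodule.fg_span_singleton y0)
      (Submodule.fg_finset_sup _ _ fun q _ => by
        by_cases hq : q ∈ Δ
        · rw [dif_pos hq]; exact hWfg q hq
        · rw [dif_neg hq]; exact Submodule.fg_bot)
    have hUle : U ≤ (I : Submodule A K) := by
      apply sup_le
      · rw [Submodule.span_le, Set.singleton_subset_iff]
        exact SetLike.mem_coe.mpr (FractionalIdeal.mem_coe.mpr hy0I)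
      · apply Finset.sup_le
        intro q _
        by_cases hq : q ∈ Δ
        · rw [dif_pos hq]; exact hWle q hq
        · rw [dif_neg hq]; exact bot_le
    let J : FractionalIdeal A⁰ K := ⟨U, FractionalIdeal.isFractional_of_fg hUfg⟩
    have hy0U : y0 ∈ U := by
      have h1 : Submodule.span A {y0} ≤ U := le_sup_left
      exact h1 (Submodule.mem_span_singleton_self y0)
    have hy0J : y0 ∈ J := hy0U
    have hJ0 : J ≠ 0 := by
      intro h0
      have := hy0J
      rw [h0, FractionalIdeal.mem_zero_iff] at this
      exact hy00 this
    rw [mem_tSet_iff]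
    refine ⟨J, hUle, hUfg, ?_⟩
    rw [mem_vOp_iff hJ0]
    intro z hz
    suffices hall : ∀ p (h : p ∈ Δ), x * z ∈ locAt A K p (hΔ p h) by
      have hmem : x * z ∈ Set.range (algebraMap A K) := by
        rw [← hint]
        exact Set.mem_iInter.mpr fun p => Set.mem_iInter.mpr fun h =>
          SetLike.mem_coe.mpr (hall p h)
      obtain ⟨b, hb⟩ := hmem
      exact (FractionalIdeal.mem_one_iff _).mpr ⟨b, hb⟩
    intro p h
    by_cases hgood : IsUnit (algebraMap A (locAt A K p (hΔ p h)) aD)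
        ∧ IsUnit (algebraMap A (locAt A K p (hΔ p h)) c)
    · -- good prime
      obtain ⟨hua, huc⟩ := hgood
      obtain ⟨va, hvaR, hva1⟩ := subalg_unit_inv _ aD hua
      obtain ⟨vc, hvcR, hvc1⟩ := subalg_unit_inv _ c huc
      have hIR : ∀ y, y ∈ (I : Submodule A K) → y ∈ locAt A K p (hΔ p h) := by
        intro y hy
        obtain ⟨b, hb⟩ := haI y hy
        have hb' : algebraMap A K b = algebraMap A K aD * y := by
          rw [hb, Algebra.smul_def]
        have hyeq : y = va * algebraMap A K b := by
          rw [hb']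
          calc y = (algebraMap A K aD * va) * y := by rw [hva1, one_mul]
            _ = va * (algebraMap A K aD * y) := by ring
        rw [hyeq]
        exact mul_mem hvaR (Subalgebra.algebraMap_mem _ b)
      have hxR : x ∈ locAt A K p (hΔ p h) := by
        have hxv' := (mem_vOp_iff (hJ'0 p h)).mp (hxv p h) 1 ?_
        · rw [mul_one, mem_one_subalg] at hxv'
          exact hxv'
        · intro y' hy'
          rw [one_mul, mem_one_subalg]
          have hy'sp : y' ∈ Submodule.span (locAt A K p (hΔ p h)) (I : Set K) :=
            hle p h (FractionalIdeal.mem_coe.mpr hy')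
          have hsp : Submodule.span (locAt A K p (hΔ p h)) (I : Set K)
              ≤ (1 : Submodule (locAt A K p (hΔ p h)) K) := by
            rw [Submodule.span_le]
            intro y hy
            rw [← FractionalIdeal.coeToSet_coeToSubmodule I] at hy
            exact SetLike.mem_coe.mpr ((mem_one_submodule_subalg _).mpr (hIR y hy))
          exact (mem_one_submodule_subalg _).mp (hsp hy'sp)
      have hzR : z ∈ locAt A K p (hΔ p h) := by
        have hzy0 : z * y0 ∈ (1 : FractionalIdeal A⁰ K) := hz y0 hy0J
        obtain ⟨d, hd⟩ := (FractionalIdeal.mem_one_iff _).mp hzy0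
        have hzc : z = algebraMap A K aD * algebraMap A K d * vc := by
          calc z = z * (algebraMap A K c * vc) := by rw [hvc1, mul_one]
            _ = (z * algebraMap A K c) * vc := by ring
            _ = (z * (algebraMap A K aD * y0)) * vc := by rw [hay0]
            _ = algebraMap A K aD * (z * y0) * vc := by ring
            _ = algebraMap A K aD * algebraMap A K d * vc := by rw [hd]
        rw [hzc]
        exact mul_mem (mul_mem (Subalgebra.algebraMap_mem _ aD)
          (Subalgebra.algebraMap_mem _ d)) hvcR
      exact mul_mem hxR hzR
    · -- bad prime
      have hpB : p ∈ B := by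
        rw [hBdef, Set.Finite.mem_toFinset]
        rcases not_and_or.mp hgood with h' | h'
        · exact Or.inl ⟨h, h'⟩
        · exact Or.inr ⟨h, h'⟩
      have hWU : W p h ≤ U := by
        have h1 : (fun q => if hq : q ∈ Δ then W q hq else ⊥) p = W p h := dif_pos h
        calc W p h = (fun q => if hq : q ∈ Δ then W q hq else ⊥) p := h1.symm
          _ ≤ B.sup (fun q => if hq : q ∈ Δ then W q hq else ⊥) :=
              Finset.le_sup (f := fun q => if hq : q ∈ Δ then W q hq else ⊥) hpB
          _ ≤ U := le_sup_right
      have h1 := (mem_vOp_iff (hJ'0 p h)).mp (hxv p h) z ?_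
      · rw [mem_one_subalg] at h1
        exact h1
      · intro y' hy'
        have hy'sp : y' ∈ Submodule.span (locAt A K p (hΔ p h)) ((W p h : Submodule A K) : Set K) :=
          hWsub p h (FractionalIdeal.mem_coe.mpr hy')
        have hsp : Submodule.span (locAt A K p (hΔ p h)) ((W p h : Submodule A K) : Set K) ≤
            Submodule.comap (LinearMap.mulLeft (locAt A K p (hΔ p h)) z)
              (1 : Submodule (locAt A K p (hΔ p h)) K) := by
          rw [Submodule.span_le]
          intro y hy
          simp only [SetLike.mem_coe, Submodule.mem_comap, LinearMap.mulLeft_apply]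
          have hyU : y ∈ U := hWU (SetLike.mem_coe.mp hy)
          have hyJ : y ∈ J := hyU
          have hz1 := hz y hyJ
          obtain ⟨b, hb⟩ := (FractionalIdeal.mem_one_iff _).mp hz1
          rw [mem_one_submodule_subalg, ← hb]
          exact Subalgebra.algebraMap_mem _ b
        have h2 := hsp hy'sp
        simp only [Submodule.mem_comap, LinearMap.mulLeft_apply] at h2
        exact (mem_one_subalg _).mpr ((mem_one_submodule_subalg _).mp h2)
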